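/- Let M1, M2 be independent finite-valued random variables that are jointly independent of the finite-valued sequence S^n = (S_1,…,S_n). Let M12 = f12(M1,S^n), X1^n = f1(M1,S^n), and X2^n = f2(M2,M12) for deterministic functions f12, f1, f2, and let Y^n = (Y_1,…,Y_n) be such that for each i, Y_i is conditionally independent of (M1,M2,M12,S^n,X1^n,X2^n,Y^{i−1}) given (S_i,X_{1,i},X_{2,i}). Then I(M1,M2;Y^n|S^n) ≤ Σ_{i=1}^n I(X_{1,i},X_{2,i};Y_i|S_i). -/

import Mathlib

open scoped BigOperators Classical
open Finset

set_option linter.unusedSectionVars false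
set_option maxHeartbeats 1000000

namespace Paper

variable {Ω : Type} [Fintype Ω]

/-- `pr μ X a` is the probability that the random variable `X` takes the value `a`
under the pmf `μ` on the finite sample space `Ω`. -/
noncomputable def pr {A : Type} (μ : Ω → ℝ) (X : Ω → A) (a : A) : ℝ :=
  ∑ ω, if X ω = a then μ ω else 0

/-- `μ` is a probability mass function on the finite space `Ω`. -/
def IsPMF (μ : Ω → ℝ) : Prop := (∀ ω, 0 ≤ μ ω) ∧ ∑ ω, μ ω = 1

/-- Shannon entropy (in bits) of the random variable `X` under `μ`. -/
noncomputable def ent {A : Type} [Fintype A] (μ : Ω → ℝ) (X : Ω → A) : ℝ :=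
  -∑ a, pr μ X a * Real.logb 2 (pr μ X a)

/-- Mutual information `I(X;Y)` (in bits) under `μ`. -/
noncomputable def mi {A B : Type} [Fintype A] [Fintype B] (μ : Ω → ℝ)
    (X : Ω → A) (Y : Ω → B) : ℝ :=
  ent μ X + ent μ Y - ent μ (fun ω => (X ω, Y ω))

/-- Conditional mutual information `I(X;Y|Z)` (in bits) under `μ`. -/
noncomputable def cmi {A B C : Type} [Fintype A] [Fintype B] [Fintype C] (μ : Ω → ℝ)
    (X : Ω → A) (Y : Ω → B) (Z : Ω → C) : ℝ :=
  ent μ (fun ω => (X ω, Z ω)) + ent μ (fun ω => (Y ω, Z ω))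
    - ent μ (fun ω => (X ω, Y ω, Z ω)) - ent μ Z

/-- `X` and `Y` are conditionally independent given `Z` under `μ`:
`P(X = a, Y = b | Z = c) = P(X = a | Z = c) · P(Y = b | Z = c)`
whenever `P(Z = c) ≠ 0`. -/
def CondIndep {A B C : Type} (μ : Ω → ℝ) (X : Ω → A) (Y : Ω → B) (Z : Ω → C) : Prop :=
  ∀ a b c, pr μ Z c ≠ 0 →
    pr μ (fun ω => (X ω, Y ω, Z ω)) (a, b, c) * pr μ Z c
      = pr μ (fun ω => (X ω, Z ω)) (a, c) * pr μ (fun ω => (Y ω, Z ω)) (b, c)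


variable {μ : Ω → ℝ}

lemma pr_nonneg (hμ : IsPMF μ) {A : Type} (X : Ω → A) (a : A) : 0 ≤ pr μ X a := by
  apply Finset.sum_nonneg
  intro ω _
  split
  · exact hμ.1 ω
  · exact le_refl 0

lemma sum_pr (hμ : IsPMF μ) {A : Type} [Fintype A] (X : Ω → A) : ∑ a, pr μ X a = 1 := by
  unfold pr
  rw [Finset.sum_comm]
  rw [← hμ.2]
  apply Finset.sum_congr rfl
  intro ω _
  simp

lemma pr_comp {A B : Type} [Fintype A] (g : A → B) (X : Ω → A) (b : B) :
    pr μ (fun ω => g (X ω)) b = ∑ a, if g a = b then pr μ X a else 0 := by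
  unfold pr
  have hsplit : ∀ a : A, (if g a = b then ∑ ω, if X ω = a then μ ω else 0 else 0)
      = ∑ ω, if g a = b then (if X ω = a then μ ω else 0) else 0 := by
    intro a; split <;> simp
  simp only [hsplit]
  rw [Finset.sum_comm]
  apply Finset.sum_congr rfl
  intro ω _
  have : ∀ a : A, (if g a = b then if X ω = a then μ ω else 0 else 0)
      = if X ω = a then (if g a = b then μ ω else 0) else 0 := by
    intro a; by_cases h1 : g a = b <;> by_cases h2 : X ω = a <;> simp [h1, h2]
  simp only [this]
  rw [Finset.sum_ite_eq univ (X ω) (fun a => if g a = b then μ ω else 0)]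
  simp

lemma ent_comp_inj {A B : Type} [Fintype A] [Fintype B] (e : A → B)
    (he : Function.Injective e) (X : Ω → A) :
    ent μ (fun ω => e (X ω)) = ent μ X := by
  unfold ent
  congr 1
  have hpr : ∀ a : A, pr μ (fun ω => e (X ω)) (e a) = pr μ X a := by
    intro a
    rw [pr_comp]
    rw [Finset.sum_eq_single a]
    · simp
    · intro a' _ ha'
      simp only [ite_eq_right_iff]
      intro h; exact absurd (he h) ha'
    · simp
  have h0 : ∀ b : B, b ∉ Finset.image e univ → pr μ (fun ω => e (X ω)) b = 0 := by
    intro b hb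
    rw [pr_comp]
    apply Finset.sum_eq_zero
    intro a _
    have : e a ≠ b := by
      intro h; exact hb (Finset.mem_image.2 ⟨a, Finset.mem_univ a, h⟩)
    simp [this]
  rw [← Finset.sum_subset (Finset.subset_univ (Finset.image e univ))]
  · rw [Finset.sum_image (fun a _ a' _ h => he h)]
    exact Finset.sum_congr rfl (fun a _ => by rw [hpr])
  · intro b _ hb
    rw [h0 b hb]
    simp

lemma ent_congr {A B : Type} [Fintype A] [Fintype B] {X : Ω → A} {Y : Ω → B}
    (g : A → B) (h : B → A) (hg : ∀ ω, Y ω = g (X ω)) (hh : ∀ ω, X ω = h (Y ω)) :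
    ent μ X = ent μ Y := by
  have e1 : ent μ (fun ω => ((X ω, Y ω) : A × B)) = ent μ X := by
    have : (fun ω => ((X ω, Y ω) : A × B)) = fun ω => (X ω, g (X ω)) := by
      funext ω; rw [hg ω]
    rw [this]
    exact ent_comp_inj (fun a => (a, g a)) (fun a a' hp => congrArg Prod.fst hp) X
  have e2 : ent μ (fun ω => ((Y ω, X ω) : B × A)) = ent μ Y := by
    have : (fun ω => ((Y ω, X ω) : B × A)) = fun ω => (Y ω, h (Y ω)) := by
      funext ω; rw [hh ω]
    rw [this]
    exact ent_comp_inj (fun b => (b, h b)) (fun b b' hp => congrArg Prod.fst hp) Y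
  have e3 : ent μ (fun ω => ((Y ω, X ω) : B × A)) = ent μ (fun ω => ((X ω, Y ω) : A × B)) := by
    exact ent_comp_inj (fun p : A × B => (p.2, p.1))
      (fun p q hpq => by
        cases p; cases q
        simp only [Prod.mk.injEq] at hpq ⊢
        exact ⟨hpq.2, hpq.1⟩)
      (fun ω => (X ω, Y ω))
  rw [← e1, ← e2, ← e3]


lemma cmi_congr {A A' B B' C C' : Type} [Fintype A] [Fintype A'] [Fintype B] [Fintype B']
    [Fintype C] [Fintype C'] {X : Ω → A} {X' : Ω → A'} {Y : Ω → B} {Y' : Ω → B'}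
    {Z : Ω → C} {Z' : Ω → C'}
    (gx : A → A') (hx : A' → A) (hgx : ∀ ω, X' ω = gx (X ω)) (hhx : ∀ ω, X ω = hx (X' ω))
    (gy : B → B') (hy : B' → B) (hgy : ∀ ω, Y' ω = gy (Y ω)) (hhy : ∀ ω, Y ω = hy (Y' ω))
    (gz : C → C') (hz : C' → C) (hgz : ∀ ω, Z' ω = gz (Z ω)) (hhz : ∀ ω, Z ω = hz (Z' ω)) :
    cmi μ X Y Z = cmi μ X' Y' Z' := by
  unfold cmi
  have e1 : ent μ (fun ω => (X ω, Z ω)) = ent μ (fun ω => (X' ω, Z' ω)) :=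
    ent_congr (fun p => (gx p.1, gz p.2)) (fun p => (hx p.1, hz p.2))
      (fun ω => by simp [hgx ω, hgz ω]) (fun ω => by simp [hhx ω, hhz ω])
  have e2 : ent μ (fun ω => (Y ω, Z ω)) = ent μ (fun ω => (Y' ω, Z' ω)) :=
    ent_congr (fun p => (gy p.1, gz p.2)) (fun p => (hy p.1, hz p.2))
      (fun ω => by simp [hgy ω, hgz ω]) (fun ω => by simp [hhy ω, hhz ω])
  have e3 : ent μ (fun ω => (X ω, Y ω, Z ω)) = ent μ (fun ω => (X' ω, Y' ω, Z' ω)) :=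
    ent_congr (fun p => (gx p.1, gy p.2.1, gz p.2.2)) (fun p => (hx p.1, hy p.2.1, hz p.2.2))
      (fun ω => by simp [hgx ω, hgy ω, hgz ω]) (fun ω => by simp [hhx ω, hhy ω, hhz ω])
  have e4 : ent μ Z = ent μ Z' := ent_congr gz hz hgz hhz
  rw [e1, e2, e3, e4]

lemma cmi_comm {A B C : Type} [Fintype A] [Fintype B] [Fintype C]
    {X : Ω → A} {Y : Ω → B} {Z : Ω → C} : cmi μ X Y Z = cmi μ Y X Z := by
  unfold cmi
  have e : ent μ (fun ω => (X ω, Y ω, Z ω)) = ent μ (fun ω => (Y ω, X ω, Z ω)) :=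
    ent_congr (fun p => (p.2.1, p.1, p.2.2)) (fun p => (p.2.1, p.1, p.2.2))
      (fun ω => rfl) (fun ω => rfl)
  rw [e]; ring

lemma cmi_chain {A B C D : Type} [Fintype A] [Fintype B] [Fintype C] [Fintype D]
    {XA : Ω → A} {XB : Ω → B} {Y : Ω → C} {Z : Ω → D} :
    cmi μ (fun ω => (XA ω, XB ω)) Y Z
      = cmi μ XB Y Z + cmi μ XA Y (fun ω => (XB ω, Z ω)) := by
  unfold cmi
  have e1 : ent μ (fun ω => ((XA ω, XB ω), Z ω)) = ent μ (fun ω => (XA ω, XB ω, Z ω)) :=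
    ent_congr (fun p => (p.1.1, p.1.2, p.2)) (fun p => ((p.1, p.2.1), p.2.2))
      (fun ω => rfl) (fun ω => rfl)
  have e2 : ent μ (fun ω => (Y ω, XB ω, Z ω)) = ent μ (fun ω => (XB ω, Y ω, Z ω)) :=
    ent_congr (fun p => (p.2.1, p.1, p.2.2)) (fun p => (p.2.1, p.1, p.2.2))
      (fun ω => rfl) (fun ω => rfl)
  have e3 : ent μ (fun ω => ((XA ω, XB ω), Y ω, Z ω))
      = ent μ (fun ω => (XA ω, Y ω, XB ω, Z ω)) :=
    ent_congr (fun p => (p.1.1, p.2.1, p.1.2, p.2.2)) (fun p => ((p.1, p.2.2.1), p.2.1, p.2.2.2))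
      (fun ω => rfl) (fun ω => rfl)
  rw [e1, e2, e3]; ring

lemma cmi_chain₂ {A B C D : Type} [Fintype A] [Fintype B] [Fintype C] [Fintype D]
    {X : Ω → A} {YA : Ω → B} {YB : Ω → C} {Z : Ω → D} :
    cmi μ X (fun ω => (YA ω, YB ω)) Z
      = cmi μ X YB Z + cmi μ X YA (fun ω => (YB ω, Z ω)) := by
  rw [cmi_comm, cmi_chain, cmi_comm (X := YB), cmi_comm (X := YA)]

lemma cmi_const₂ {A B C : Type} [Fintype A] [Fintype B] [Fintype C]
    {X : Ω → A} {Y : Ω → B} {Z : Ω → C} (c : B) (hY : ∀ ω, Y ω = c) :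
    cmi μ X Y Z = 0 := by
  unfold cmi
  have e1 : ent μ (fun ω => (Y ω, Z ω)) = ent μ Z :=
    ent_congr (fun p => p.2) (fun z => (c, z)) (fun ω => rfl) (fun ω => by simp [hY ω])
  have e2 : ent μ (fun ω => (X ω, Y ω, Z ω)) = ent μ (fun ω => (X ω, Z ω)) :=
    ent_congr (fun p => (p.1, p.2.2)) (fun p => (p.1, c, p.2))
      (fun ω => rfl) (fun ω => by simp [hY ω])
  rw [e1, e2]; ring

section Marg
variable {A B C : Type} [Fintype A] [Fintype B] [Fintype C]
  (X : Ω → A) (Y : Ω → B) (Z : Ω → C)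

lemma marg_XZ (a : A) (c : C) :
    pr μ (fun ω => (X ω, Z ω)) (a, c) = ∑ b, pr μ (fun ω => (X ω, Y ω, Z ω)) (a, b, c) := by
  unfold pr
  rw [Finset.sum_comm]
  apply Finset.sum_congr rfl
  intro ω _
  simp only [Prod.mk.injEq]
  have : ∀ b : B, (if X ω = a ∧ Y ω = b ∧ Z ω = c then μ ω else 0)
      = if Y ω = b then (if X ω = a ∧ Z ω = c then μ ω else 0) else 0 := by
    intro b
    by_cases h1 : X ω = a <;> by_cases h2 : Y ω = b <;> by_cases h3 : Z ω = c <;>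
      simp [h1, h2, h3]
  simp only [this, Finset.sum_ite_eq, Finset.mem_univ, if_true]

lemma marg_YZ (b : B) (c : C) :
    pr μ (fun ω => (Y ω, Z ω)) (b, c) = ∑ a, pr μ (fun ω => (X ω, Y ω, Z ω)) (a, b, c) := by
  unfold pr
  rw [Finset.sum_comm]
  apply Finset.sum_congr rfl
  intro ω _
  simp only [Prod.mk.injEq]
  have : ∀ a : A, (if X ω = a ∧ Y ω = b ∧ Z ω = c then μ ω else 0)
      = if X ω = a then (if Y ω = b ∧ Z ω = c then μ ω else 0) else 0 := by
    intro a
    by_cases h1 : X ω = a <;> by_cases h2 : Y ω = b <;> by_cases h3 : Z ω = c <;>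
      simp [h1, h2, h3]
  simp only [this, Finset.sum_ite_eq, Finset.mem_univ, if_true]

lemma marg_fst {D E : Type} [Fintype D] (W : Ω → D) (V : Ω → E) (v : E) :
    pr μ V v = ∑ d, pr μ (fun ω => (W ω, V ω)) (d, v) := by
  unfold pr
  rw [Finset.sum_comm]
  apply Finset.sum_congr rfl
  intro ω _
  simp only [Prod.mk.injEq]
  have : ∀ d : D, (if W ω = d ∧ V ω = v then μ ω else 0)
      = if W ω = d then (if V ω = v then μ ω else 0) else 0 := by
    intro d
    by_cases h1 : W ω = d <;> by_cases h2 : V ω = v <;> simp [h1, h2]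
  simp only [this, Finset.sum_ite_eq, Finset.mem_univ, if_true]

lemma marg_Z (c : C) :
    pr μ Z c = ∑ a, ∑ b, pr μ (fun ω => (X ω, Y ω, Z ω)) (a, b, c) := by
  rw [marg_fst X Z c]
  apply Finset.sum_congr rfl
  intro a _
  exact marg_XZ X Y Z a c

lemma cmi_eq_sum :
    cmi μ X Y Z = ∑ a, ∑ b, ∑ c,
      pr μ (fun ω => (X ω, Y ω, Z ω)) (a, b, c) *
        (Real.logb 2 (pr μ (fun ω => (X ω, Y ω, Z ω)) (a, b, c))
          + Real.logb 2 (pr μ Z c)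
          - Real.logb 2 (pr μ (fun ω => (X ω, Z ω)) (a, c))
          - Real.logb 2 (pr μ (fun ω => (Y ω, Z ω)) (b, c))) := by
  set p : A → B → C → ℝ := fun a b c => pr μ (fun ω => (X ω, Y ω, Z ω)) (a, b, c) with hp
  have hXYZ : ent μ (fun ω => (X ω, Y ω, Z ω))
      = -∑ a, ∑ b, ∑ c, p a b c * Real.logb 2 (p a b c) := by
    unfold ent
    rw [Fintype.sum_prod_type]
    congr 1
    apply Finset.sum_congr rfl
    intro a _
    rw [Fintype.sum_prod_type]
  have hXZ : ent μ (fun ω => (X ω, Z ω))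
      = -∑ a, ∑ b, ∑ c, p a b c * Real.logb 2 (pr μ (fun ω => (X ω, Z ω)) (a, c)) := by
    unfold ent
    rw [Fintype.sum_prod_type]
    congr 1
    apply Finset.sum_congr rfl
    intro a _
    rw [Finset.sum_comm]
    apply Finset.sum_congr rfl
    intro c _
    rw [marg_XZ X Y Z a c, Finset.sum_mul]
  have hYZ : ent μ (fun ω => (Y ω, Z ω))
      = -∑ a, ∑ b, ∑ c, p a b c * Real.logb 2 (pr μ (fun ω => (Y ω, Z ω)) (b, c)) := by
    have key : ∑ a, ∑ b, ∑ c, p a b c * Real.logb 2 (pr μ (fun ω => (Y ω, Z ω)) (b, c))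
        = ∑ b, ∑ c, pr μ (fun ω => (Y ω, Z ω)) (b, c)
            * Real.logb 2 (pr μ (fun ω => (Y ω, Z ω)) (b, c)) := by
      rw [Finset.sum_comm]
      apply Finset.sum_congr rfl
      intro b _
      rw [Finset.sum_comm]
      apply Finset.sum_congr rfl
      intro c _
      rw [← Finset.sum_mul, ← marg_YZ X Y Z b c]
    unfold ent
    rw [Fintype.sum_prod_type, key]
  have hZ : ent μ Z = -∑ a, ∑ b, ∑ c, p a b c * Real.logb 2 (pr μ Z c) := by
    have key : ∑ a, ∑ b, ∑ c, p a b c * Real.logb 2 (pr μ Z c)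
        = ∑ c, pr μ Z c * Real.logb 2 (pr μ Z c) := by
      calc ∑ a, ∑ b, ∑ c, p a b c * Real.logb 2 (pr μ Z c)
          = ∑ a, ∑ c, ∑ b, p a b c * Real.logb 2 (pr μ Z c) := by
            apply Finset.sum_congr rfl; intro a _; rw [Finset.sum_comm]
        _ = ∑ c, ∑ a, ∑ b, p a b c * Real.logb 2 (pr μ Z c) := by rw [Finset.sum_comm]
        _ = ∑ c, pr μ Z c * Real.logb 2 (pr μ Z c) := by
            apply Finset.sum_congr rfl
            intro c _
            rw [marg_Z X Y Z c, Finset.sum_mul]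
            apply Finset.sum_congr rfl
            intro a _
            rw [Finset.sum_mul]
    unfold ent
    rw [key]
  unfold cmi
  rw [hXYZ, hXZ, hYZ, hZ]
  simp only [sub_eq_add_neg, neg_neg, ← Finset.sum_neg_distrib]
  simp only [← Finset.sum_add_distrib]
  apply Finset.sum_congr rfl; intro a _
  apply Finset.sum_congr rfl; intro b _
  apply Finset.sum_congr rfl; intro c _
  ring
end Marg

section Core
variable {A B C : Type} [Fintype A] [Fintype B] [Fintype C]
  (X : Ω → A) (Y : Ω → B) (Z : Ω → C)

lemma sum3_rot (f : A → B → C → ℝ) :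
    ∑ a, ∑ b, ∑ c, f a b c = ∑ c, ∑ a, ∑ b, f a b c := by
  calc ∑ a, ∑ b, ∑ c, f a b c
      = ∑ a, ∑ c, ∑ b, f a b c := by
        apply Finset.sum_congr rfl; intro a _; rw [Finset.sum_comm]
    _ = ∑ c, ∑ a, ∑ b, f a b c := by rw [Finset.sum_comm]

lemma cmi_eq_zero_of_condIndep (hμ : IsPMF μ) (h : CondIndep μ X Y Z) :
    cmi μ X Y Z = 0 := by
  rw [cmi_eq_sum X Y Z]
  apply Finset.sum_eq_zero; intro a _
  apply Finset.sum_eq_zero; intro b _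
  apply Finset.sum_eq_zero; intro c _
  set p := pr μ (fun ω => (X ω, Y ω, Z ω)) (a, b, c) with hpdef
  by_cases hp : p = 0
  · rw [hp]; ring
  · have hppos : 0 < p := lt_of_le_of_ne (pr_nonneg hμ _ _) (Ne.symm hp)
    have hnn : ∀ a' b' c', (0:ℝ) ≤ pr μ (fun ω => (X ω, Y ω, Z ω)) (a', b', c') :=
      fun a' b' c' => pr_nonneg hμ _ _
    have hZle : p ≤ pr μ Z c := by
      rw [marg_Z X Y Z c]
      calc p ≤ ∑ b', pr μ (fun ω => (X ω, Y ω, Z ω)) (a, b', c) :=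
            Finset.single_le_sum (f := fun b' => pr μ (fun ω => (X ω, Y ω, Z ω)) (a, b', c))
              (fun b' _ => hnn a b' c) (Finset.mem_univ b)
        _ ≤ ∑ a', ∑ b', pr μ (fun ω => (X ω, Y ω, Z ω)) (a', b', c) :=
            Finset.single_le_sum
              (f := fun a' => ∑ b', pr μ (fun ω => (X ω, Y ω, Z ω)) (a', b', c))
              (fun a' _ => Finset.sum_nonneg fun b' _ => hnn a' b' c)
              (Finset.mem_univ a)
    have hXZle : p ≤ pr μ (fun ω => (X ω, Z ω)) (a, c) := by
      rw [marg_XZ X Y Z a c]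
      exact Finset.single_le_sum (f := fun b' => pr μ (fun ω => (X ω, Y ω, Z ω)) (a, b', c))
        (fun b' _ => hnn a b' c) (Finset.mem_univ b)
    have hYZle : p ≤ pr μ (fun ω => (Y ω, Z ω)) (b, c) := by
      rw [marg_YZ X Y Z b c]
      exact Finset.single_le_sum (f := fun a' => pr μ (fun ω => (X ω, Y ω, Z ω)) (a', b, c))
        (fun a' _ => hnn a' b c) (Finset.mem_univ a)
    have hZpos : 0 < pr μ Z c := lt_of_lt_of_le hppos hZle
    have hXZpos : 0 < pr μ (fun ω => (X ω, Z ω)) (a, c) := lt_of_lt_of_le hppos hXZle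
    have hYZpos : 0 < pr μ (fun ω => (Y ω, Z ω)) (b, c) := lt_of_lt_of_le hppos hYZle
    have heq := h a b c (ne_of_gt hZpos)
    have : Real.logb 2 p + Real.logb 2 (pr μ Z c)
        - Real.logb 2 (pr μ (fun ω => (X ω, Z ω)) (a, c))
        - Real.logb 2 (pr μ (fun ω => (Y ω, Z ω)) (b, c)) = 0 := by
      rw [← Real.logb_mul (ne_of_gt hppos) (ne_of_gt hZpos)]
      rw [sub_sub, ← Real.logb_mul (ne_of_gt hXZpos) (ne_of_gt hYZpos)]
      rw [← hpdef] at heq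
      rw [heq]
      ring
    rw [this]; ring

lemma cmi_nonneg (hμ : IsPMF μ) : 0 ≤ cmi μ X Y Z := by
  classical
  rw [cmi_eq_sum X Y Z]
  set p : A → B → C → ℝ := fun a b c => pr μ (fun ω => (X ω, Y ω, Z ω)) (a, b, c) with hpdef
  set pXZ : A → C → ℝ := fun a c => pr μ (fun ω => (X ω, Z ω)) (a, c) with hXZdef
  set pYZ : B → C → ℝ := fun b c => pr μ (fun ω => (Y ω, Z ω)) (b, c) with hYZdef
  set pZ : C → ℝ := fun c => pr μ Z c with hZdef
  have L2 : (0:ℝ) < Real.log 2 := Real.log_pos (by norm_num)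
  have hpnn : ∀ a b c, (0:ℝ) ≤ p a b c := fun a b c => pr_nonneg hμ _ _
  have hXZnn : ∀ a c, (0:ℝ) ≤ pXZ a c := fun a c => pr_nonneg hμ _ _
  have hYZnn : ∀ b c, (0:ℝ) ≤ pYZ b c := fun b c => pr_nonneg hμ _ _
  have hZnn : ∀ c, (0:ℝ) ≤ pZ c := fun c => pr_nonneg hμ _ _
  set lower : A → B → C → ℝ := fun a b c =>
    if p a b c = 0 then 0 else (p a b c - pXZ a c * pYZ b c / pZ c) / Real.log 2 with hlow
  have hterm : ∀ a b c, lower a b c ≤ p a b c *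
      (Real.logb 2 (p a b c) + Real.logb 2 (pZ c)
        - Real.logb 2 (pXZ a c) - Real.logb 2 (pYZ b c)) := by
    intro a b c
    by_cases hp : p a b c = 0
    · simp [hlow, hp]
    · have hppos : 0 < p a b c := lt_of_le_of_ne (pr_nonneg hμ _ _) (Ne.symm hp)
      have hZle : p a b c ≤ pZ c := by
        rw [hZdef]; simp only []
        rw [marg_Z X Y Z c]
        calc p a b c ≤ ∑ b', p a b' c :=
              Finset.single_le_sum (f := fun b' => p a b' c)
                (fun b' _ => hpnn a b' c) (Finset.mem_univ b)
          _ ≤ ∑ a', ∑ b', p a' b' c :=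
              Finset.single_le_sum (f := fun a' => ∑ b', p a' b' c)
                (fun a' _ => Finset.sum_nonneg fun b' _ => hpnn a' b' c)
                (Finset.mem_univ a)
      have hXZle : p a b c ≤ pXZ a c := by
        rw [hXZdef]; simp only []
        rw [marg_XZ X Y Z a c]
        exact Finset.single_le_sum (f := fun b' => p a b' c)
          (fun b' _ => hpnn a b' c) (Finset.mem_univ b)
      have hYZle : p a b c ≤ pYZ b c := by
        rw [hYZdef]; simp only []
        rw [marg_YZ X Y Z b c]
        exact Finset.single_le_sum (f := fun a' => p a' b c)
          (fun a' _ => hpnn a' b c) (Finset.mem_univ a)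
      have hZpos : 0 < pZ c := lt_of_lt_of_le hppos hZle
      have hXZpos : 0 < pXZ a c := lt_of_lt_of_le hppos hXZle
      have hYZpos : 0 < pYZ b c := lt_of_lt_of_le hppos hYZle
      have hxpos : 0 < p a b c * pZ c / (pXZ a c * pYZ b c) := by positivity
      have hlog : 1 - (p a b c * pZ c / (pXZ a c * pYZ b c))⁻¹
          ≤ Real.log (p a b c * pZ c / (pXZ a c * pYZ b c)) :=
        Real.one_sub_inv_le_log_of_pos hxpos
      have hlogexp : Real.log (p a b c * pZ c / (pXZ a c * pYZ b c))
          = Real.log (p a b c) + Real.log (pZ c) - Real.log (pXZ a c) - Real.log (pYZ b c) := by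
        rw [Real.log_div (by positivity) (by positivity),
          Real.log_mul (ne_of_gt hppos) (ne_of_gt hZpos),
          Real.log_mul (ne_of_gt hXZpos) (ne_of_gt hYZpos)]
        ring
      have hlb : Real.logb 2 (p a b c) + Real.logb 2 (pZ c)
          - Real.logb 2 (pXZ a c) - Real.logb 2 (pYZ b c)
          = (Real.log (p a b c) + Real.log (pZ c) - Real.log (pXZ a c) - Real.log (pYZ b c))
            / Real.log 2 := by
        simp only [Real.logb]; ring
      rw [hlb, ← hlogexp]
      rw [hlow]
      simp only [hp, if_false]
      rw [div_le_iff₀ L2]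
      have h2 : (p a b c - pXZ a c * pYZ b c / pZ c)
          = p a b c * (1 - (p a b c * pZ c / (pXZ a c * pYZ b c))⁻¹) := by
        field_simp
      rw [h2]
      calc p a b c * (1 - (p a b c * pZ c / (pXZ a c * pYZ b c))⁻¹)
          ≤ p a b c * Real.log (p a b c * pZ c / (pXZ a c * pYZ b c)) :=
            mul_le_mul_of_nonneg_left hlog (le_of_lt hppos)
        _ = p a b c * (Real.log (p a b c * pZ c / (pXZ a c * pYZ b c)) / Real.log 2)
            * Real.log 2 := by field_simp
  have hsum : 0 ≤ ∑ a, ∑ b, ∑ c, lower a b c := by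
    have h1 : ∑ a, ∑ b, ∑ c, lower a b c
        = (∑ a, ∑ b, ∑ c, (if p a b c = 0 then 0 else p a b c - pXZ a c * pYZ b c / pZ c))
          / Real.log 2 := by
      rw [Finset.sum_div]
      apply Finset.sum_congr rfl; intro a _
      rw [Finset.sum_div]
      apply Finset.sum_congr rfl; intro b _
      rw [Finset.sum_div]
      apply Finset.sum_congr rfl; intro c _
      rw [hlow]
      by_cases hp : p a b c = 0 <;> simp [hp]
    rw [h1]
    apply div_nonneg _ (le_of_lt L2)
    have hsplit : ∀ a b c, (if p a b c = 0 then 0 else p a b c - pXZ a c * pYZ b c / pZ c)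
        = p a b c - (if p a b c = 0 then 0 else pXZ a c * pYZ b c / pZ c) := by
      intro a b c
      by_cases hp : p a b c = 0 <;> simp [hp]
    simp only [hsplit]
    simp only [Finset.sum_sub_distrib]
    rw [sub_nonneg]
    -- show ∑∑∑ (if p=0 then 0 else q) ≤ ∑∑∑ p
    have step1 : ∑ a, ∑ b, ∑ c, (if p a b c = 0 then 0 else pXZ a c * pYZ b c / pZ c)
        ≤ ∑ a, ∑ b, ∑ c, (if pZ c = 0 then 0 else pXZ a c * pYZ b c / pZ c) := by
      apply Finset.sum_le_sum; intro a _
      apply Finset.sum_le_sum; intro b _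
      apply Finset.sum_le_sum; intro c _
      by_cases hp : p a b c = 0
      · simp only [hp, if_true]
        by_cases hz : pZ c = 0
        · simp [hz]
        · simp only [hz, if_false]
          have hzpos : 0 < pZ c := lt_of_le_of_ne (hZnn c) (Ne.symm hz)
          exact div_nonneg (mul_nonneg (hXZnn a c) (hYZnn b c)) hzpos.le
      · have hppos : 0 < p a b c := lt_of_le_of_ne (pr_nonneg hμ _ _) (Ne.symm hp)
        have hZle : p a b c ≤ pZ c := by
          rw [hZdef]; simp only []
          rw [marg_Z X Y Z c]
          calc p a b c ≤ ∑ b', p a b' c :=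
                Finset.single_le_sum (f := fun b' => p a b' c)
                  (fun b' _ => hpnn a b' c) (Finset.mem_univ b)
            _ ≤ ∑ a', ∑ b', p a' b' c :=
                Finset.single_le_sum (f := fun a' => ∑ b', p a' b' c)
                  (fun a' _ => Finset.sum_nonneg fun b' _ => hpnn a' b' c)
                  (Finset.mem_univ a)
        have hz : pZ c ≠ 0 := ne_of_gt (lt_of_lt_of_le hppos hZle)
        simp [hp, hz]
    have step2 : ∑ a, ∑ b, ∑ c, (if pZ c = 0 then 0 else pXZ a c * pYZ b c / pZ c)
        = ∑ c, (if pZ c = 0 then 0 else pZ c) := by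
      rw [sum3_rot]
      apply Finset.sum_congr rfl; intro c _
      by_cases hz : pZ c = 0
      · simp [hz]
      · simp only [hz, if_false]
        have hA : ∑ a, pXZ a c = pZ c := by
          rw [hZdef]; simp only []
          rw [marg_Z X Y Z c]
          apply Finset.sum_congr rfl; intro a _
          exact marg_XZ X Y Z a c
        have hB : ∑ b, pYZ b c = pZ c := by
          rw [hZdef]; simp only []
          rw [marg_Z X Y Z c, Finset.sum_comm]
          apply Finset.sum_congr rfl; intro b _
          exact marg_YZ X Y Z b c
        have hprod : (∑ a, pXZ a c) * (∑ b, pYZ b c) / pZ c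
            = ∑ a, ∑ b, pXZ a c * pYZ b c / pZ c := by
          rw [Finset.sum_mul_sum, Finset.sum_div]
          apply Finset.sum_congr rfl; intro a _
          rw [Finset.sum_div]
        rw [← hprod, hA, hB]
        field_simp
    have step3 : ∑ c, (if pZ c = 0 then 0 else pZ c) = ∑ a, ∑ b, ∑ c, p a b c := by
      rw [sum3_rot]
      apply Finset.sum_congr rfl; intro c _
      rw [show (∑ a, ∑ b, p a b c) = pZ c from (marg_Z X Y Z c).symm]
      by_cases hz : pZ c = 0 <;> simp [hz]
    calc ∑ a, ∑ b, ∑ c, (if p a b c = 0 then 0 else pXZ a c * pYZ b c / pZ c)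
        ≤ ∑ a, ∑ b, ∑ c, (if pZ c = 0 then 0 else pXZ a c * pYZ b c / pZ c) := step1
      _ = ∑ c, (if pZ c = 0 then 0 else pZ c) := step2
      _ = ∑ a, ∑ b, ∑ c, p a b c := step3
  calc (0:ℝ) ≤ ∑ a, ∑ b, ∑ c, lower a b c := hsum
    _ ≤ _ := by
      apply Finset.sum_le_sum; intro a _
      apply Finset.sum_le_sum; intro b _
      apply Finset.sum_le_sum; intro c _
      exact hterm a b c
end Core

section Derived
variable {μ : Ω → ℝ}

/-- Mutual information does not increase when passing to a function of the first argument. -/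
lemma cmi_mono {A B C D : Type} [Fintype A] [Fintype B] [Fintype C] [Fintype D]
    (hμ : IsPMF μ) (G : Ω → A) (U : Ω → B) (Yv : Ω → C) (Z : Ω → D)
    (f : A → B) (hf : ∀ ω, U ω = f (G ω)) :
    cmi μ U Yv Z ≤ cmi μ G Yv Z := by
  have h1 : cmi μ G Yv Z = cmi μ (fun ω => (G ω, U ω)) Yv Z :=
    cmi_congr (fun a => (a, f a)) Prod.fst
      (fun ω => by rw [hf ω]) (fun ω => rfl)
      id id (fun ω => rfl) (fun ω => rfl)
      id id (fun ω => rfl) (fun ω => rfl)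
  have h2 : cmi μ (fun ω => (G ω, U ω)) Yv Z
      = cmi μ U Yv Z + cmi μ G Yv (fun ω => (U ω, Z ω)) := cmi_chain
  have h3 : 0 ≤ cmi μ G Yv (fun ω => (U ω, Z ω)) := cmi_nonneg G Yv _ hμ
  linarith [h1, h2, h3]

/-- Conditioning on a function of the conditioning variable while adjoining it to the
first argument does not decrease mutual information. -/
lemma cmi_key_step {A B C D : Type} [Fintype A] [Fintype B] [Fintype C] [Fintype D]
    (hμ : IsPMF μ) (X : Ω → A) (Yv : Ω → B) (V : Ω → C) (Z : Ω → D)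
    (f : C → D) (hf : ∀ ω, Z ω = f (V ω)) :
    cmi μ X Yv V ≤ cmi μ (fun ω => (X ω, V ω)) Yv Z := by
  have h1 : cmi μ (fun ω => (X ω, V ω)) Yv Z
      = cmi μ V Yv Z + cmi μ X Yv (fun ω => (V ω, Z ω)) := cmi_chain
  have h2 : cmi μ X Yv V = cmi μ X Yv (fun ω => (V ω, Z ω)) :=
    cmi_congr id id (fun ω => rfl) (fun ω => rfl)
      id id (fun ω => rfl) (fun ω => rfl)
      (fun c => (c, f c)) Prod.fst (fun ω => by rw [hf ω]) (fun ω => rfl)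
  have h3 : 0 ≤ cmi μ V Yv Z := cmi_nonneg V Yv Z hμ
  linarith [h1, h2, h3]
end Derived

/-- Converse step for the sum rate in Theorem 1: under the same assumptions as for the
single-rate bound, `I(M₁,M₂;Yⁿ|Sⁿ) ≤ Σᵢ I(X₁ᵢ,X₂ᵢ;Yᵢ|Sᵢ)`. -/
theorem converse_bound_sum_rate_one_way
    {Ω : Type} [Fintype Ω] (μ : Ω → ℝ) (hμ : IsPMF μ)
    {n : ℕ} {𝒮 𝒳₁ 𝒳₂ 𝒴 ℳ₁ ℳ₂ ℳ₁₂ : Type}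
    [Fintype 𝒮] [Fintype 𝒳₁] [Fintype 𝒳₂] [Fintype 𝒴]
    [Fintype ℳ₁] [Fintype ℳ₂] [Fintype ℳ₁₂]
    (S : Fin n → Ω → 𝒮) (Y : Fin n → Ω → 𝒴) (M1 : Ω → ℳ₁) (M2 : Ω → ℳ₂)
    (f12 : ℳ₁ → (Fin n → 𝒮) → ℳ₁₂)
    (f1 : ℳ₁ → (Fin n → 𝒮) → Fin n → 𝒳₁)
    (f2 : ℳ₂ → ℳ₁₂ → Fin n → 𝒳₂)
    (M12 : Ω → ℳ₁₂) (hM12 : ∀ ω, M12 ω = f12 (M1 ω) (fun i => S i ω))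
    (X1 : Fin n → Ω → 𝒳₁) (hX1 : ∀ i ω, X1 i ω = f1 (M1 ω) (fun j => S j ω) i)
    (X2 : Fin n → Ω → 𝒳₂) (hX2 : ∀ i ω, X2 i ω = f2 (M2 ω) (M12 ω) i)
    (hindep : ∀ (m1 : ℳ₁) (m2 : ℳ₂) (s : Fin n → 𝒮),
      pr μ (fun ω => (M1 ω, M2 ω, fun i => S i ω)) (m1, m2, s)
        = pr μ M1 m1 * pr μ M2 m2 * pr μ (fun ω => fun i => S i ω) s)
    (hY : ∀ i : Fin n, CondIndep μ (Y i)
      (fun ω => (M1 ω, M2 ω, M12 ω, (fun j => S j ω),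
        (fun j => X1 j ω), (fun j => X2 j ω),
        (fun j : {j : Fin n // j < i} => Y j.1 ω)))
      (fun ω => (S i ω, X1 i ω, X2 i ω))) :
    cmi μ (fun ω => (M1 ω, M2 ω)) (fun ω => fun i => Y i ω)
        (fun ω => fun i => S i ω)
      ≤ ∑ i : Fin n, cmi μ (fun ω => (X1 i ω, X2 i ω)) (Y i) (S i) := by
  classical
  set T : Ω → ℳ₁ × ℳ₂ := fun ω => (M1 ω, M2 ω) with hT
  set Sn : Ω → (Fin n → 𝒮) := fun ω => fun i => S i ω with hSn
  -- partial observation sequences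
  have main : ∀ k : ℕ, k ≤ n →
      cmi μ T (fun ω => (fun j : {j : Fin n // (j : ℕ) < k} => Y j.1 ω)) Sn
        ≤ ∑ i : Fin n, (if (i : ℕ) < k
            then cmi μ (fun ω => (X1 i ω, X2 i ω)) (Y i) (S i) else 0) := by
    intro k
    induction k with
    | zero =>
      intro _
      have h0 : cmi μ T (fun ω => (fun j : {j : Fin n // (j : ℕ) < 0} => Y j.1 ω)) Sn = 0 := by
        apply cmi_const₂ (fun j : {j : Fin n // (j : ℕ) < 0} => (absurd j.2 (Nat.not_lt_zero _)))
        intro ω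
        funext j
        exact absurd j.2 (Nat.not_lt_zero _)
      rw [h0]
      simp
    | succ k ih =>
      intro hk1
      have hk : k < n := hk1
      set i₀ : Fin n := ⟨k, hk⟩ with hi₀
      -- split off the last observation
      have e1 : cmi μ T (fun ω => (fun j : {j : Fin n // (j : ℕ) < k + 1} => Y j.1 ω)) Sn
          = cmi μ T (fun ω => (Y i₀ ω, (fun j : {j : Fin n // (j : ℕ) < k} => Y j.1 ω))) Sn := by
        refine @cmi_congr Ω _ μ (ℳ₁ × ℳ₂) (ℳ₁ × ℳ₂)
          ({j : Fin n // (j : ℕ) < k + 1} → 𝒴) (𝒴 × ({j : Fin n // (j : ℕ) < k} → 𝒴))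
          (Fin n → 𝒮) (Fin n → 𝒮) _ _ _ _ _ _ _ _ _ _ _ _
          id id (fun ω => rfl) (fun ω => rfl)
          (fun t : ({j : Fin n // (j : ℕ) < k + 1} → 𝒴) =>
            ((t ⟨i₀, Nat.lt_succ_self k⟩ : 𝒴),
              (fun j : {j : Fin n // (j : ℕ) < k} => t ⟨j.1, Nat.lt_succ_of_lt j.2⟩)))
          (fun q : 𝒴 × ({j : Fin n // (j : ℕ) < k} → 𝒴) =>
            (fun j : {j : Fin n // (j : ℕ) < k + 1} =>
              if h : (j.1 : ℕ) < k then q.2 ⟨j.1, h⟩ else q.1))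
          (fun ω => rfl)
          ?_ id id (fun ω => rfl) (fun ω => rfl)
        intro ω
        funext j
        by_cases h : (j.1 : ℕ) < k
        · simp [h]
        · simp only [h, dif_neg, not_false_iff]
          have hj : j.1 = i₀ := by
            apply Fin.ext
            show (j.1 : ℕ) = k
            have h2 := j.2
            omega
          rw [hj]
      have e2 : cmi μ T (fun ω => (Y i₀ ω, (fun j : {j : Fin n // (j : ℕ) < k} => Y j.1 ω))) Sn
          = cmi μ T (fun ω => (fun j : {j : Fin n // (j : ℕ) < k} => Y j.1 ω)) Sn
            + cmi μ T (Y i₀)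
                (fun ω => ((fun j : {j : Fin n // (j : ℕ) < k} => Y j.1 ω), Sn ω)) :=
        cmi_chain₂
      -- bound the incremental term
      have b1 : cmi μ T (Y i₀)
            (fun ω => ((fun j : {j : Fin n // (j : ℕ) < k} => Y j.1 ω), Sn ω))
          ≤ cmi μ (fun ω =>
              (T ω, ((fun j : {j : Fin n // (j : ℕ) < k} => Y j.1 ω), Sn ω)))
              (Y i₀) (S i₀) := by
        exact cmi_key_step hμ _ _ _ _ (fun q => q.2 i₀) (fun ω => rfl)
      have b2 : cmi μ (fun ω =>
              (T ω, ((fun j : {j : Fin n // (j : ℕ) < k} => Y j.1 ω), Sn ω)))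
              (Y i₀) (S i₀)
          ≤ cmi μ (fun ω => (X1 i₀ ω, X2 i₀ ω)) (Y i₀) (S i₀) := by
        set U : Ω → (ℳ₁ × ℳ₂) × (({j : Fin n // (j : ℕ) < k} → 𝒴) × (Fin n → 𝒮)) :=
          fun ω => (T ω, ((fun j : {j : Fin n // (j : ℕ) < k} => Y j.1 ω), Sn ω)) with hU
        have hfx : ∀ ω, (X1 i₀ ω, X2 i₀ ω)
            = (fun u : (ℳ₁ × ℳ₂) × (({j : Fin n // (j : ℕ) < k} → 𝒴) × (Fin n → 𝒮)) =>
                (f1 u.1.1 u.2.2 i₀, f2 u.1.2 (f12 u.1.1 u.2.2) i₀)) (U ω) := by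
          intro ω
          simp only [hU]
          rw [hX1 i₀ ω, hX2 i₀ ω, hM12 ω]
        have c1 : cmi μ U (Y i₀) (S i₀)
            = cmi μ (fun ω => (U ω, (X1 i₀ ω, X2 i₀ ω))) (Y i₀) (S i₀) := by
          refine @cmi_congr Ω _ μ
            ((ℳ₁ × ℳ₂) × (({j : Fin n // (j : ℕ) < k} → 𝒴) × (Fin n → 𝒮)))
            (((ℳ₁ × ℳ₂) × (({j : Fin n // (j : ℕ) < k} → 𝒴) × (Fin n → 𝒮))) × (𝒳₁ × 𝒳₂))
            𝒴 𝒴 𝒮 𝒮 _ _ _ _ _ _ _ _ _ _ _ _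
            (fun u : (ℳ₁ × ℳ₂) × (({j : Fin n // (j : ℕ) < k} → 𝒴) × (Fin n → 𝒮)) =>
              (u, (f1 u.1.1 u.2.2 i₀, f2 u.1.2 (f12 u.1.1 u.2.2) i₀)))
            Prod.fst
            (fun ω => by rw [hfx ω]) (fun ω => rfl)
            id id (fun ω => rfl) (fun ω => rfl)
            id id (fun ω => rfl) (fun ω => rfl)
        have c2 : cmi μ (fun ω => (U ω, (X1 i₀ ω, X2 i₀ ω))) (Y i₀) (S i₀)
            = cmi μ (fun ω => (X1 i₀ ω, X2 i₀ ω)) (Y i₀) (S i₀)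
              + cmi μ U (Y i₀) (fun ω => ((X1 i₀ ω, X2 i₀ ω), S i₀ ω)) := cmi_chain
        -- the residual term vanishes by the channel conditional independence
        set G : Ω → ℳ₁ × ℳ₂ × ℳ₁₂ × (Fin n → 𝒮) × (Fin n → 𝒳₁) × (Fin n → 𝒳₂)
            × ({j : Fin n // j < i₀} → 𝒴) :=
          fun ω => (M1 ω, M2 ω, M12 ω, (fun j => S j ω),
            (fun j => X1 j ω), (fun j => X2 j ω),
            (fun j : {j : Fin n // j < i₀} => Y j.1 ω)) with hG
        have m1 : cmi μ U (Y i₀) (fun ω => ((X1 i₀ ω, X2 i₀ ω), S i₀ ω))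
            ≤ cmi μ G (Y i₀) (fun ω => ((X1 i₀ ω, X2 i₀ ω), S i₀ ω)) := by
          apply cmi_mono hμ G U (Y i₀) _
            (fun v => ((v.1, v.2.1),
              ((fun j : {j : Fin n // (j : ℕ) < k} => v.2.2.2.2.2.2 ⟨j.1, j.2⟩), v.2.2.2.1)))
          intro ω
          rfl
        have m2 : cmi μ G (Y i₀) (fun ω => ((X1 i₀ ω, X2 i₀ ω), S i₀ ω)) = 0 := by
          have hc : cmi μ G (Y i₀) (fun ω => ((X1 i₀ ω, X2 i₀ ω), S i₀ ω))
              = cmi μ (Y i₀) G (fun ω => (S i₀ ω, X1 i₀ ω, X2 i₀ ω)) := by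
            rw [cmi_comm]
            refine @cmi_congr Ω _ μ 𝒴 𝒴
              (ℳ₁ × ℳ₂ × ℳ₁₂ × (Fin n → 𝒮) × (Fin n → 𝒳₁) × (Fin n → 𝒳₂)
                × ({j : Fin n // j < i₀} → 𝒴))
              (ℳ₁ × ℳ₂ × ℳ₁₂ × (Fin n → 𝒮) × (Fin n → 𝒳₁) × (Fin n → 𝒳₂)
                × ({j : Fin n // j < i₀} → 𝒴))
              ((𝒳₁ × 𝒳₂) × 𝒮) (𝒮 × 𝒳₁ × 𝒳₂) _ _ _ _ _ _ _ _ _ _ _ _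
              id id (fun ω => rfl) (fun ω => rfl)
              id id (fun ω => rfl) (fun ω => rfl)
              (fun q : (𝒳₁ × 𝒳₂) × 𝒮 => (q.2, q.1.1, q.1.2))
              (fun q : 𝒮 × 𝒳₁ × 𝒳₂ => ((q.2.1, q.2.2), q.1))
              (fun ω => rfl) (fun ω => rfl)
          rw [hc]
          exact cmi_eq_zero_of_condIndep (Y i₀) G _ hμ (hY i₀)
        have hres : cmi μ U (Y i₀) (fun ω => ((X1 i₀ ω, X2 i₀ ω), S i₀ ω)) ≤ 0 := by
          rw [← m2]; exact m1
        calc cmi μ U (Y i₀) (S i₀)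
            = cmi μ (fun ω => (X1 i₀ ω, X2 i₀ ω)) (Y i₀) (S i₀)
              + cmi μ U (Y i₀) (fun ω => ((X1 i₀ ω, X2 i₀ ω), S i₀ ω)) := by rw [c1, c2]
          _ ≤ cmi μ (fun ω => (X1 i₀ ω, X2 i₀ ω)) (Y i₀) (S i₀) := by linarith
      -- sum bookkeeping
      have hsum : ∑ i : Fin n, (if (i : ℕ) < k + 1
            then cmi μ (fun ω => (X1 i ω, X2 i ω)) (Y i) (S i) else 0)
          = (∑ i : Fin n, (if (i : ℕ) < k
              then cmi μ (fun ω => (X1 i ω, X2 i ω)) (Y i) (S i) else 0))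
            + cmi μ (fun ω => (X1 i₀ ω, X2 i₀ ω)) (Y i₀) (S i₀) := by
        have hpt : ∀ i : Fin n, (if (i : ℕ) < k + 1
              then cmi μ (fun ω => (X1 i ω, X2 i ω)) (Y i) (S i) else 0)
            = (if (i : ℕ) < k
                then cmi μ (fun ω => (X1 i ω, X2 i ω)) (Y i) (S i) else 0)
              + (if i = i₀
                then cmi μ (fun ω => (X1 i ω, X2 i ω)) (Y i) (S i) else 0) := by
          intro i
          rcases lt_trichotomy (i : ℕ) k with h | h | h
          · have h1 : (i : ℕ) < k + 1 := Nat.lt_succ_of_lt h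
            have h2 : i ≠ i₀ := by
              intro he
              rw [he] at h
              exact lt_irrefl k h
            simp [h, h1, h2]
          · have hik : i = i₀ := by apply Fin.ext; exact h
            simp [h, hik, hi₀]
          · have h1 : ¬ (i : ℕ) < k + 1 := by omega
            have h2 : ¬ (i : ℕ) < k := by omega
            have h3 : i ≠ i₀ := by
              intro he
              rw [he] at h
              exact lt_irrefl k h
            simp [h1, h2, h3]
        rw [Finset.sum_congr rfl (fun i _ => hpt i), Finset.sum_add_distrib]
        congr 1
        rw [Finset.sum_ite_eq' Finset.univ i₀
          (fun i => cmi μ (fun ω => (X1 i ω, X2 i ω)) (Y i) (S i))]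
        simp
      have ihk := ih (Nat.le_of_lt hk)
      calc cmi μ T (fun ω => (fun j : {j : Fin n // (j : ℕ) < k + 1} => Y j.1 ω)) Sn
          = cmi μ T (fun ω => (fun j : {j : Fin n // (j : ℕ) < k} => Y j.1 ω)) Sn
            + cmi μ T (Y i₀)
                (fun ω => ((fun j : {j : Fin n // (j : ℕ) < k} => Y j.1 ω), Sn ω)) := by
            rw [e1, e2]
        _ ≤ (∑ i : Fin n, (if (i : ℕ) < k
              then cmi μ (fun ω => (X1 i ω, X2 i ω)) (Y i) (S i) else 0))
            + cmi μ (fun ω => (X1 i₀ ω, X2 i₀ ω)) (Y i₀) (S i₀) :=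
            add_le_add ihk (le_trans b1 b2)
        _ = ∑ i : Fin n, (if (i : ℕ) < k + 1
              then cmi μ (fun ω => (X1 i ω, X2 i ω)) (Y i) (S i) else 0) := hsum.symm
  have hfin : cmi μ T (fun ω => fun i => Y i ω) Sn
      = cmi μ T (fun ω => (fun j : {j : Fin n // (j : ℕ) < n} => Y j.1 ω)) Sn := by
    refine @cmi_congr Ω _ μ (ℳ₁ × ℳ₂) (ℳ₁ × ℳ₂) (Fin n → 𝒴)
      ({j : Fin n // (j : ℕ) < n} → 𝒴) (Fin n → 𝒮) (Fin n → 𝒮) _ _ _ _ _ _ _ _ _ _ _ _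
      id id (fun ω => rfl) (fun ω => rfl)
      (fun t : (Fin n → 𝒴) => (fun j : {j : Fin n // (j : ℕ) < n} => t j.1))
      (fun t : ({j : Fin n // (j : ℕ) < n} → 𝒴) => (fun i : Fin n => t ⟨i, i.isLt⟩))
      (fun ω => rfl) (fun ω => rfl)
      id id (fun ω => rfl) (fun ω => rfl)
  have hsumfin : ∑ i : Fin n, (if (i : ℕ) < n
        then cmi μ (fun ω => (X1 i ω, X2 i ω)) (Y i) (S i) else 0)
      = ∑ i : Fin n, cmi μ (fun ω => (X1 i ω, X2 i ω)) (Y i) (S i) := by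
    apply Finset.sum_congr rfl
    intro i _
    simp [i.isLt]
  calc cmi μ T (fun ω => fun i => Y i ω) Sn
      = cmi μ T (fun ω => (fun j : {j : Fin n // (j : ℕ) < n} => Y j.1 ω)) Sn := hfin
    _ ≤ ∑ i : Fin n, (if (i : ℕ) < n
          then cmi μ (fun ω => (X1 i ω, X2 i ω)) (Y i) (S i) else 0) := main n le_rfl
    _ = ∑ i : Fin n, cmi μ (fun ω => (X1 i ω, X2 i ω)) (Y i) (S i) := hsumfin

end Paper
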